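/- Let ε > 0, let m be a positive integer, and let λ ∈ [0, 1 − 1/(2m)) satisfy λ ≥ (2m−1)/(2m + e^ε − 1). Then for all x, y ∈ [0,1], (2m(1−λ)−1)·x + λ ≤ e^ε·((2m(1−λ)−1)·y + λ). Consequently, for any value distributions p_g the Q&A privacy level max_{g≠g', v,v'∈V} ((2m(1−λ)−1)p_g(v)+λ)/((2m(1−λ)−1)p_{g'}(v')+λ) is at most e^ε, i.e., the Q&A scheme with this λ is ε-locally differentially private regardless of the users' value distributions. (Remark 1, equation (9).) -/

import Mathlib

open scoped BigOperators

noncomputable section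

/-- The value alphabet `V = {±1, …, ±m} ⊆ ℤ`. -/
def Vset (m : ℕ) : Finset ℤ := (Finset.Icc (-(m : ℤ)) m).erase 0

/-- Values as a (finite) type. -/
abbrev Vt (m : ℕ) : Type := {v : ℤ // v ∈ Vset m}

/-- Query matrices: `k × 2m` matrices whose rows are permutations of `V`,
encoded row-wise as equivalences between column indices and values. -/
abbrev Query (k m : ℕ) : Type := Fin k → (Fin (2*m) ≃ Vt m)

/-- The randomized response channel `RR_λ` on `V`: probability that input `v`
is turned into output `w`. -/
def RR (m : ℕ) (lam : ℝ) (v w : Vt m) : ℝ :=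
  if w = v then 1 - lam else lam / (2*m - 1)
/-- If `λ ∈ [0, 1 − 1/(2m))` satisfies
`λ ≥ (2m−1)/(2m + e^ε − 1)`, then for all `x, y ∈ [0,1]`,
`(2m(1−λ)−1)x + λ ≤ e^ε·((2m(1−λ)−1)y + λ)`; consequently, for any value
distributions `p_g` (with values in `[0,1]`) the Q&A privacy level
`max_{g≠g', v,v'} ((2m(1−λ)−1)p_g(v)+λ)/((2m(1−λ)−1)p_{g'}(v')+λ)` is at most
`e^ε`, i.e. the Q&A scheme with this `λ` is `ε`-LDP regardless of the users'
value distributions. -/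
theorem stmt2 (m k : ℕ) (hm : 0 < m) (hk : 2 ≤ k)
    (ε : ℝ) (hε : 0 < ε)
    (lam : ℝ) (hlam0 : 0 ≤ lam) (hlam1 : lam < 1 - 1/(2*m))
    (hlam2 : (2*m - 1)/(2*m + Real.exp ε - 1) ≤ lam) :
    (∀ x ∈ Set.Icc (0:ℝ) 1, ∀ y ∈ Set.Icc (0:ℝ) 1,
        (2*m*(1-lam) - 1) * x + lam
          ≤ Real.exp ε * ((2*m*(1-lam) - 1) * y + lam))
    ∧ ∀ p : Fin k → Vt m → ℝ, (∀ g v, p g v ∈ Set.Icc (0:ℝ) 1) →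
        (⨆ vv : Vt m × Vt m, ⨆ gg : {x : Fin k × Fin k // x.1 ≠ x.2},
            ((2*m*(1-lam) - 1) * p gg.1.1 vv.1 + lam) /
            ((2*m*(1-lam) - 1) * p gg.1.2 vv.2 + lam)) ≤ Real.exp ε := by

  have hm1 : (1:ℝ) ≤ (m:ℝ) := by exact_mod_cast hm
  have hA : 0 < 2*(m:ℝ)*(1-lam) - 1 := by
    have h2m : (0:ℝ) < 2*m := by positivity
    have : 1/(2*(m:ℝ)) < 1 - lam := by linarith
    have := (div_lt_iff₀ h2m).mp this
    linarith [mul_comm ((1:ℝ)-lam) (2*(m:ℝ))]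
  set A := 2*(m:ℝ)*(1-lam) - 1 with hAdef
  have hE : 1 ≤ Real.exp ε := Real.one_le_exp hε.le
  have hden : (0:ℝ) < 2*m + Real.exp ε - 1 := by linarith
  have hlam2' : (2*(m:ℝ) - 1) ≤ lam * (2*m + Real.exp ε - 1) := by
    have := (div_le_iff₀ hden).mp hlam2
    linarith
  have hkey : A + lam ≤ Real.exp ε * lam := by
    simp only [hAdef]; nlinarith
  have hlampos : 0 < lam := by
    rcases eq_or_lt_of_le hlam0 with h | h
    · exfalso; rw [← h] at hlam2'; nlinarith
    · exact h
  have hmain : ∀ x ∈ Set.Icc (0:ℝ) 1, ∀ y ∈ Set.Icc (0:ℝ) 1,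
      A * x + lam ≤ Real.exp ε * (A * y + lam) := by
    rintro x ⟨hx0, hx1⟩ y ⟨hy0, hy1⟩
    have h1 : A * x + lam ≤ A + lam := by nlinarith
    have h2 : Real.exp ε * lam ≤ Real.exp ε * (A * y + lam) := by
      nlinarith [mul_nonneg (mul_nonneg (Real.exp_pos ε).le hA.le) hy0]
    linarith
  refine ⟨hmain, ?_⟩
  intro p hp
  have hv : Nonempty (Vt m) := by
    refine ⟨⟨1, ?_⟩⟩
    simp [Vset, Finset.mem_erase, Finset.mem_Icc]
    omega
  have hg : Nonempty {x : Fin k × Fin k // x.1 ≠ x.2} := by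
    refine ⟨⟨(⟨0, by omega⟩, ⟨1, by omega⟩), ?_⟩⟩
    simp [Fin.ext_iff]
  have hbound : ∀ (vv : Vt m × Vt m) (gg : {x : Fin k × Fin k // x.1 ≠ x.2}),
      (A * p gg.1.1 vv.1 + lam) / (A * p gg.1.2 vv.2 + lam) ≤ Real.exp ε := by
    intro vv gg
    obtain ⟨h10, h11⟩ := hp gg.1.1 vv.1
    obtain ⟨h20, h21⟩ := hp gg.1.2 vv.2
    have hd : 0 < A * p gg.1.2 vv.2 + lam := by nlinarith
    rw [div_le_iff₀ hd]
    have := hmain _ ⟨h10, h11⟩ _ ⟨h20, h21⟩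
    linarith
  exact ciSup_le fun vv => ciSup_le fun gg => hbound vv gg
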